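/- For every finite simple graph G = (V, E) and every fractional matching x of G, the vector x/2 lies in the matching polytope of G. -/

import Mathlib

open Finset

section Aux

variable {V : Type*} [Fintype V] [DecidableEq V] (G : SimpleGraph V) [DecidableRel G.Adj]

private def shares (e f : {e : Sym2 V // e ∈ G.edgeFinset}) : Prop :=
  ∃ v : V, v ∈ e.1 ∧ v ∈ f.1

private instance : ∀ e f, Decidable (shares G e f) := fun _ _ => Fintype.decidableExistsFintype

private lemma shares_self (e : {e : Sym2 V // e ∈ G.edgeFinset}) : shares G e e :=
  ⟨e.1.out.1, Sym2.out_fst_mem _, Sym2.out_fst_mem _⟩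

private lemma shares_symm {e f : {e : Sym2 V // e ∈ G.edgeFinset}}
    (h : shares G e f) : shares G f e := by
  obtain ⟨v, h1, h2⟩ := h; exact ⟨v, h2, h1⟩

private def MSet : Set ({e : Sym2 V // e ∈ G.edgeFinset} → ℝ) :=
  {χ | ∃ M : Finset (Sym2 V), M ⊆ G.edgeFinset ∧
    (∀ e ∈ M, ∀ f ∈ M, e ≠ f → ∀ v : V, v ∈ e → v ∉ f) ∧
    χ = fun e => if e.1 ∈ M then 1 else 0}

private lemma chi_mem (M : Finset {e : Sym2 V // e ∈ G.edgeFinset})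
    (hM : ∀ e ∈ M, ∀ f ∈ M, e ≠ f → ¬ shares G e f) :
    (fun e => if e ∈ M then (1:ℝ) else 0) ∈ MSet G := by
  refine ⟨M.image Subtype.val, ?_, ?_, ?_⟩
  · intro e he; obtain ⟨a, _, rfl⟩ := Finset.mem_image.1 he; exact a.2
  · rintro e he f hf hef v hve hvf
    obtain ⟨a, ha, rfl⟩ := Finset.mem_image.1 he
    obtain ⟨b, hb, rfl⟩ := Finset.mem_image.1 hf
    exact hM a ha b hb (fun h => hef (by rw [h])) ⟨v, hve, hvf⟩
  · funext e
    have h : e.1 ∈ M.image Subtype.val ↔ e ∈ M := by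
      constructor
      · intro hh
        obtain ⟨a, haM, hav⟩ := Finset.mem_image.1 hh
        rwa [Subtype.ext hav] at haM
      · intro hh; exact Finset.mem_image_of_mem _ hh
    simp only [h]

/-- Existence of a maximal matching inside a nonempty finset of edges. -/
private lemma exists_max_matching (S : Finset {e : Sym2 V // e ∈ G.edgeFinset})
    (hS : S.Nonempty) :
    ∃ M : Finset {e : Sym2 V // e ∈ G.edgeFinset}, M ⊆ S ∧ M.Nonempty ∧
      (∀ e ∈ M, ∀ f ∈ M, e ≠ f → ¬ shares G e f) ∧
      (∀ e ∈ S, ∃ m ∈ M, shares G e m) := by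
  obtain ⟨e₀, he₀⟩ := hS
  set T := S.powerset.filter (fun M => ∀ e ∈ M, ∀ f ∈ M, e ≠ f → ¬ shares G e f) with hT
  have hTne : T.Nonempty := by
    refine ⟨{e₀}, ?_⟩
    simp only [hT, Finset.mem_filter, Finset.mem_powerset]
    refine ⟨Finset.singleton_subset_iff.2 he₀, ?_⟩
    intro e he f hf hef
    simp only [Finset.mem_singleton] at he hf
    exact absurd (he.trans hf.symm) hef
  obtain ⟨M, hMT, hMmax⟩ := Finset.exists_max_image T Finset.card hTne
  simp only [hT, Finset.mem_filter, Finset.mem_powerset] at hMT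
  obtain ⟨hMS, hMpm⟩ := hMT
  have hcard1 : 1 ≤ M.card := by
    have := hMmax {e₀} (by
      simp only [hT, Finset.mem_filter, Finset.mem_powerset]
      refine ⟨Finset.singleton_subset_iff.2 he₀, ?_⟩
      intro e he f hf hef
      simp only [Finset.mem_singleton] at he hf
      exact absurd (he.trans hf.symm) hef)
    simpa using this
  refine ⟨M, hMS, Finset.card_pos.1 hcard1, hMpm, ?_⟩
  intro e heS
  by_contra hcon
  push_neg at hcon
  have heM : e ∉ M := fun h => hcon e h (shares_self G e)
  have hins : insert e M ∈ T := by
    simp only [hT, Finset.mem_filter, Finset.mem_powerset]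
    refine ⟨Finset.insert_subset heS hMS, ?_⟩
    intro a ha b hb hab
    rw [Finset.mem_insert] at ha hb
    rcases ha with ha | ha
    · rcases hb with hb | hb
      · exact absurd (ha.trans hb.symm) hab
      · exact fun hs => hcon b hb (by rw [ha] at hs; exact hs)
    · rcases hb with hb | hb
      · exact fun hs => hcon a ha (shares_symm G (by rw [hb] at hs; exact hs))
      · exact hMpm a ha b hb hab
  have := hMmax _ hins
  rw [Finset.card_insert_of_notMem heM] at this
  omega

private lemma aux (n : ℕ) :
    ∀ y : {e : Sym2 V // e ∈ G.edgeFinset} → ℝ,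
    (Finset.univ.filter (fun e => 0 < y e)).card ≤ n →
    (∀ e, 0 ≤ y e) →
    (∀ e, 0 < y e → ∑ f, (if shares G e f then y f else 0) ≤ 1) →
    y ∈ convexHull ℝ (MSet G) := by
  induction n with
  | zero =>
    intro y hcard hy0 _
    have hzero : ∀ e, y e = 0 := by
      intro e
      by_contra h
      have : e ∈ Finset.univ.filter (fun e => 0 < y e) := by
        simp [lt_of_le_of_ne (hy0 e) (Ne.symm h)]
      have := Finset.card_pos.2 ⟨e, this⟩
      omega
    have : y = fun e => if e ∈ (∅ : Finset {e : Sym2 V // e ∈ G.edgeFinset}) then (1:ℝ) else 0 := by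
      funext e; simp [hzero e]
    rw [this]
    exact subset_convexHull ℝ _ (chi_mem G ∅ (by simp))
  | succ n ih =>
    intro y hcard hy0 hconstr
    set S := Finset.univ.filter (fun e => 0 < y e) with hSdef
    by_cases hS : S.Nonempty
    · obtain ⟨M, hMS, hMne, hMpm, hMmax⟩ := exists_max_matching G S hS
      obtain ⟨e₀, he₀M, he₀min⟩ := Finset.exists_min_image M y hMne
      set t := y e₀ with ht
      have ht0 : 0 < t := by
        have := hMS he₀M
        rw [hSdef, Finset.mem_filter] at this
        exact this.2
      have hyle1 : ∀ e, 0 < y e → y e ≤ 1 := by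
        intro e he
        have h1 := hconstr e he
        have h2 : y e ≤ ∑ f, (if shares G e f then y f else 0) := by
          have := Finset.single_le_sum (f := fun f => if shares G e f then y f else 0)
            (fun f _ => by split; exacts [hy0 f, le_rfl]) (Finset.mem_univ e)
          simpa [shares_self G e] using this
        linarith
      have ht1 : t ≤ 1 := hyle1 e₀ ht0
      rcases lt_or_eq_of_le ht1 with htlt | hteq
      · -- t < 1 : peel off t • χ_M
        have h1t : (0:ℝ) < 1 - t := by linarith
        set y' : {e : Sym2 V // e ∈ G.edgeFinset} → ℝ :=
          fun e => (y e - if e ∈ M then t else 0) / (1 - t) with hy'def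
        have hy'0 : ∀ e, 0 ≤ y' e := by
          intro e
          apply div_nonneg _ h1t.le
          split
          · next h => linarith [he₀min e h]
          · linarith [hy0 e]
        have hy'pos_mem : ∀ e, 0 < y' e → e ∈ S ∧ e ≠ e₀ := by
          intro e h
          rw [hy'def] at h
          have hnum : 0 < y e - if e ∈ M then t else 0 := by
            by_contra hc
            push_neg at hc
            have : (y e - if e ∈ M then t else 0) / (1 - t) ≤ 0 :=
              div_nonpos_of_nonpos_of_nonneg hc h1t.le
            have h' : 0 < (y e - if e ∈ M then t else 0) / (1 - t) := h
            linarith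
          constructor
          · rw [hSdef, Finset.mem_filter]
            refine ⟨Finset.mem_univ _, ?_⟩
            split at hnum
            · linarith
            · linarith
          · rintro rfl
            rw [if_pos he₀M, ht, sub_self] at hnum
            exact lt_irrefl 0 hnum
        have hsupp : Finset.univ.filter (fun e => 0 < y' e) ⊆ S.erase e₀ := by
          intro e he
          rw [Finset.mem_filter] at he
          obtain ⟨heS, hene⟩ := hy'pos_mem e he.2
          exact Finset.mem_erase.2 ⟨hene, heS⟩
        have hcard' : (Finset.univ.filter (fun e => 0 < y' e)).card ≤ n := by
          have h1 := Finset.card_le_card hsupp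
          have h2 : (S.erase e₀).card = S.card - 1 :=
            Finset.card_erase_of_mem (hMS he₀M)
          have h3 : 1 ≤ S.card := Finset.card_pos.2 ⟨e₀, hMS he₀M⟩
          omega
        have hconstr' : ∀ e, 0 < y' e →
            ∑ f, (if shares G e f then y' f else 0) ≤ 1 := by
          intro e he
          have heS := (hy'pos_mem e he).1
          have heypos : 0 < y e := by
            rw [hSdef, Finset.mem_filter] at heS; exact heS.2
          obtain ⟨m, hmM, hshare⟩ := hMmax e heS
          have hsum1 := hconstr e heypos
          have hsum2 : t ≤ ∑ f, (if shares G e f then (if f ∈ M then t else 0) else 0) := by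
            have := Finset.single_le_sum
              (f := fun f => if shares G e f then (if f ∈ M then t else 0) else 0)
              (fun f _ => by
                split
                · split
                  · exact ht0.le
                  · exact le_rfl
                · exact le_rfl)
              (Finset.mem_univ m)
            simpa [hshare, hmM] using this
          have hsplit : ∀ f, (if shares G e f then y' f else 0) =
              ((if shares G e f then y f else 0) -
               (if shares G e f then (if f ∈ M then t else 0) else 0)) / (1 - t) := by
            intro f
            by_cases h : shares G e f <;> simp [h, hy'def, sub_div]
          rw [Finset.sum_congr rfl (fun f _ => hsplit f)]
          rw [← Finset.sum_div, Finset.sum_sub_distrib]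
          rw [div_le_one h1t]
          linarith
        have hy'hull := ih y' hcard' hy'0 hconstr'
        have hχ : (fun e => if e ∈ M then (1:ℝ) else 0) ∈ convexHull ℝ (MSet G) :=
          subset_convexHull ℝ _ (chi_mem G M hMpm)
        have hcomb : y = t • (fun e => if e ∈ M then (1:ℝ) else 0) + (1 - t) • y' := by
          funext e
          simp only [Pi.add_apply, Pi.smul_apply, smul_eq_mul, hy'def]
          by_cases h : e ∈ M <;> simp [h] <;> field_simp <;> ring
        rw [hcomb]
        exact (convex_convexHull ℝ (MSet G)) hχ hy'hull ht0.le (by linarith) (by ring)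
      · -- t = 1 : y is exactly χ_M
        have hyeq : y = fun e => if e ∈ M then (1:ℝ) else 0 := by
          funext e
          by_cases h : e ∈ M
          · simp only [h, if_true]
            have h1 : (1:ℝ) ≤ y e := hteq ▸ he₀min e h
            have h2 : y e ≤ 1 := hyle1 e (by linarith)
            linarith
          · simp only [h, if_false]
            by_contra hne
            have hepos : 0 < y e := lt_of_le_of_ne (hy0 e) (Ne.symm hne)
            have heS : e ∈ S := by
              rw [hSdef, Finset.mem_filter]; exact ⟨Finset.mem_univ _, hepos⟩
            obtain ⟨m, hmM, hshare⟩ := hMmax e heS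
            have hm1 : (1:ℝ) ≤ y m := hteq ▸ he₀min m hmM
            have hme : m ≠ e := fun hh => h (hh ▸ hmM)
            have hsum := hconstr m (by linarith)
            have hpair : y m + y e ≤ ∑ f, (if shares G m f then y f else 0) := by
              have hsub : ({m, e} : Finset _) ⊆ Finset.univ := Finset.subset_univ _
              have := Finset.sum_le_sum_of_subset_of_nonneg
                (f := fun f => if shares G m f then y f else 0) hsub
                (fun f _ _ => by by_cases hsf : shares G m f <;> simp [hsf, hy0 f])
              rw [Finset.sum_pair hme] at this
              simpa [shares_self G m, shares_symm G hshare] using this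
            linarith
        rw [hyeq]
        exact subset_convexHull ℝ _ (chi_mem G M hMpm)
    · rw [Finset.not_nonempty_iff_eq_empty] at hS
      have : (Finset.univ.filter (fun e => 0 < y e)).card ≤ 0 := by
        rw [hSdef] at hS; rw [hS]; simp
      have hzero : ∀ e, y e = 0 := by
        intro e
        by_contra h
        have : e ∈ Finset.univ.filter (fun e => 0 < y e) := by
          simp [lt_of_le_of_ne (hy0 e) (Ne.symm h)]
        rw [hSdef] at hS
        rw [hS] at this
        exact absurd this (Finset.notMem_empty e)
      have : y = fun e => if e ∈ (∅ : Finset {e : Sym2 V // e ∈ G.edgeFinset}) then (1:ℝ) else 0 := by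
        funext e; simp [hzero e]
      rw [this]
      exact subset_convexHull ℝ _ (chi_mem G ∅ (by simp))

end Aux

/-- For every finite simple graph `G` and every fractional matching `x` of `G`,
the vector `x/2` lies in the matching polytope of `G`. -/
theorem half_fractional_matching_in_matching_polytope
    {V : Type*} [Fintype V] [DecidableEq V]
    (G : SimpleGraph V) [DecidableRel G.Adj]
    (x : {e : Sym2 V // e ∈ G.edgeFinset} → ℝ)
    (hx0 : ∀ e, 0 ≤ x e) (hx1 : ∀ e, x e ≤ 1)
    (hxdeg : ∀ v : V,
      ∑ e : {e : Sym2 V // e ∈ G.edgeFinset}, (if v ∈ e.1 then x e else 0) ≤ 1) :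
    (fun e => x e / 2) ∈
      convexHull ℝ {χ : {e : Sym2 V // e ∈ G.edgeFinset} → ℝ |
        ∃ M : Finset (Sym2 V), M ⊆ G.edgeFinset ∧
          (∀ e ∈ M, ∀ f ∈ M, e ≠ f → ∀ v : V, v ∈ e → v ∉ f) ∧
          χ = fun e => if e.1 ∈ M then 1 else 0} := by
  have := aux G (Finset.univ.filter (fun e => 0 < x e / 2)).card
    (fun e => x e / 2) le_rfl (fun e => by linarith [hx0 e]) ?_
  · exact this
  · intro e _
    obtain ⟨es, hes⟩ := e
    induction es using Sym2.ind with
    | _ u v =>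
      have hbound : ∀ f : {e : Sym2 V // e ∈ G.edgeFinset},
          (if shares G ⟨s(u,v), hes⟩ f then x f / 2 else 0) ≤
          ((if u ∈ f.1 then x f else 0) + (if v ∈ f.1 then x f else 0)) / 2 := by
        intro f
        by_cases h : shares G ⟨s(u,v), hes⟩ f
        · obtain ⟨w, hw1, hw2⟩ := h
          simp only [if_pos] at *
          rw [if_pos ⟨w, hw1, hw2⟩]
          rw [Sym2.mem_iff] at hw1
          rcases hw1 with rfl | rfl
          · rw [if_pos hw2]
            have : (0:ℝ) ≤ if v ∈ f.1 then x f else 0 := by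
              split; exacts [hx0 f, le_rfl]
            linarith
          · rw [if_pos hw2]
            have : (0:ℝ) ≤ if u ∈ f.1 then x f else 0 := by
              split; exacts [hx0 f, le_rfl]
            linarith
        · rw [if_neg h]
          apply div_nonneg _ (by norm_num)
          have h1 : (0:ℝ) ≤ if u ∈ f.1 then x f else 0 := by
            split; exacts [hx0 f, le_rfl]
          have h2 : (0:ℝ) ≤ if v ∈ f.1 then x f else 0 := by
            split; exacts [hx0 f, le_rfl]
          linarith
      calc ∑ f, (if shares G ⟨s(u,v), hes⟩ f then x f / 2 else 0)
          ≤ ∑ f, ((if u ∈ f.1 then x f else 0) + (if v ∈ f.1 then x f else 0)) / 2 :=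
            Finset.sum_le_sum (fun f _ => hbound f)
        _ ≤ 1 := by
            rw [← Finset.sum_div, Finset.sum_add_distrib]
            have h1 := hxdeg u
            have h2 := hxdeg v
            linarith
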